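/- arXiv:2305.17399 — 3 statements merged into one kernel-verified Lean document; each statement's English description precedes it below -/
import Mathlib

section
/- Let G be a multiplicative Lie algebra and let H be an ideal of G contained in 𝒵(G) = LZ(G) ∩ Z(G) such that G/H is M𝒵-nilpotent. Then G is M𝒵-nilpotent. -/
/-- A multiplicative Lie algebra (Ellis): a group `G` with a second binary
operation `⋆` satisfying the five identities. `ˣy` denotes `x*y*x⁻¹`. -/
class MulLie (G : Type*) [Group G] where
  star : G → G → G
  star_self : ∀ x : G, star x x = 1
  star_mul_right : ∀ x y z : G, star x (y * z) = star x y * (y * star x z * y⁻¹)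
  star_mul_left : ∀ x y z : G, star (x * y) z = (x * star y z * x⁻¹) * star x z
  jacobi : ∀ x y z : G,
    star (star x y) (y * z * y⁻¹) * star (star y z) (z * x * z⁻¹) *
      star (star z x) (x * y * x⁻¹) = 1
  conj_star : ∀ x y z : G, z * star x y * z⁻¹ = star (z * x * z⁻¹) (z * y * z⁻¹)

open MulLie
open scoped commutatorElement

/-- The lower central series `M₀(G) = G`, `M_{n+1}(G) = (G ⋆ Mₙ(G))[G, Mₙ(G)]`. -/
def Mser (G : Type*) [Group G] [MulLie G] : ℕ → Subgroup G
  | 0 => ⊤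
  | n + 1 => Subgroup.closure
      {z : G | ∃ g m : G, m ∈ Mser G n ∧ (z = star g m ∨ z = ⁅g, m⁆)}

/-- Antisymmetry: `x ⋆ y = (y ⋆ x)⁻¹`. -/
lemma MulLie.star_antisymm {G : Type*} [Group G] [MulLie G] (x y : G) :
    star x y = (star y x)⁻¹ := by
  have h1 := star_self (x * y)
  rw [star_mul_left, star_mul_right, star_mul_right, star_self, star_self] at h1
  have h2 : x * (star y x * star x y) * x⁻¹ = 1 := by
    rw [← h1]; group
  have h3 : star y x * star x y = 1 := by
    have := congrArg (fun t => x⁻¹ * t * x) h2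
    simpa [mul_assoc] using this
  exact eq_inv_of_mul_eq_one_right h3

/-- Let `H` be an ideal of `G` contained in `𝒵(G) = LZ(G) ∩ Z(G)` such that the
quotient multiplicative Lie algebra `G/H` is `M𝒵`-nilpotent. Then `G` is
`M𝒵`-nilpotent. -/
theorem MZnilpotent_of_quotient_by_central_ideal
    {G : Type*} [Group G] [MulLie G] (H : Subgroup G) [H.Normal]
    (hideal : ∀ g h : G, h ∈ H → star g h ∈ H)
    (hcentral : ∀ h ∈ H, (∀ y : G, star h y = 1) ∧ h ∈ Subgroup.center G)
    (L : MulLie (G ⧸ H))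
    (hcompat : ∀ x y : G, (QuotientGroup.mk (star x y) : G ⧸ H) =
      L.star (QuotientGroup.mk x) (QuotientGroup.mk y))
    (hnil : ∃ n : ℕ, @Mser (G ⧸ H) _ L n = ⊥) :
    ∃ n : ℕ, Mser G n = ⊥ := by
  obtain ⟨n, hn⟩ := hnil
  -- the quotient map sends `Mser G n` into `Mser (G⧸H) n`
  have key : ∀ k : ℕ, Mser G k ≤ (@Mser (G ⧸ H) _ L k).comap (QuotientGroup.mk' H) := by
    intro k
    induction k with
    | zero => simp [Mser]
    | succ k ih =>
      show Mser G (k+1) ≤ _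
      rw [Mser, Subgroup.closure_le]
      rintro z ⟨g, m, hm, hz | hz⟩ <;> subst hz <;>
        simp only [Subgroup.coe_comap, Set.mem_preimage, SetLike.mem_coe,
          QuotientGroup.mk'_apply]
      · rw [Mser]
        refine Subgroup.subset_closure ?_
        exact ⟨QuotientGroup.mk g, QuotientGroup.mk m, ih hm, Or.inl (hcompat g m)⟩
      · rw [Mser]
        refine Subgroup.subset_closure ?_
        refine ⟨QuotientGroup.mk g, QuotientGroup.mk m, ih hm, Or.inr ?_⟩
        simp [commutatorElement_def]
  have hMn : Mser G n ≤ H := by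
    intro x hx
    have := key n hx
    rw [hn] at this
    simpa [QuotientGroup.eq_one_iff] using this
  refine ⟨n + 1, ?_⟩
  rw [Mser, Subgroup.closure_eq_bot_iff]
  rintro z ⟨g, m, hm, hz | hz⟩ <;> subst hz
  · have hmH : m ∈ H := hMn hm
    have : star m g = 1 := (hcentral m hmH).1 g
    rw [MulLie.star_antisymm, this, inv_one]
    exact rfl
  · have hmH : m ∈ H := hMn hm
    have hc := (Subgroup.mem_center_iff.mp (hcentral m hmH).2) g
    rw [commutatorElement_def, hc]
    group
    rfl
end

section
/- Let H and K be ideals of a multiplicative Lie algebra G such that G/H and G/K are M𝒵-nilpotent of classes n and m respectively. Then G/(H∩K) is M𝒵-nilpotent of class at most max(n,m). -/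
open MulLie
open scoped commutatorElement

section Aux

variable {G : Type*} [Group G] [MulLie G]

lemma star_one' (x : G) : star x (1 : G) = 1 := by
  have h := star_mul_right x (1 : G) (1 : G)
  simp only [mul_one, one_mul, inv_one] at h
  exact left_eq_mul.mp h

lemma mulLieStarInv (x y : G) : star x y⁻¹ = y⁻¹ * (star x y)⁻¹ * y := by
  have h := star_mul_right x y⁻¹ y
  simp [star_one'] at h
  have : star x y⁻¹ * (y⁻¹ * star x y * y) = 1 := by
    rw [← h]
  have := eq_inv_of_mul_eq_one_left this
  rw [this]
  group

/-- `Mser G k` is an ideal: normal and star-closed. -/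
lemma Mser_isIdeal : ∀ k : ℕ, (Mser G k).Normal ∧
    (∀ g m : G, m ∈ Mser G k → star g m ∈ Mser G k) := by
  intro k
  induction k with
  | zero =>
    constructor
    · show (⊤ : Subgroup G).Normal; infer_instance
    · intro g m _; exact Subgroup.mem_top _
  | succ k ih =>
    obtain ⟨ihN, ihS⟩ := ih
    set S : Set G := {z : G | ∃ g m : G, m ∈ Mser G k ∧ (z = star g m ∨ z = ⁅g, m⁆)}
      with hS
    have hMser : Mser G (k + 1) = Subgroup.closure S := rfl
    -- S is in Mser G k
    have hSsub : S ⊆ (Mser G k : Set G) := by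
      rintro z ⟨g, m, hm, h | h⟩
      · rw [h]; exact ihS g m hm
      · rw [h]
        have h1 : g * m * g⁻¹ ∈ Mser G k := ihN.conj_mem m hm g
        have h2 : m⁻¹ ∈ Mser G k := (Mser G k).inv_mem hm
        have : ⁅g, m⁆ = (g * m * g⁻¹) * m⁻¹ := by group
        rw [this]; exact (Mser G k).mul_mem h1 h2
    -- S is conjugation-invariant
    have hconj : ∀ c : G, ∀ z ∈ S, c * z * c⁻¹ ∈ S := by
      rintro c z ⟨g, m, hm, h | h⟩
      · refine ⟨c * g * c⁻¹, c * m * c⁻¹, ihN.conj_mem m hm c, Or.inl ?_⟩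
        rw [h, conj_star]
      · refine ⟨c * g * c⁻¹, c * m * c⁻¹, ihN.conj_mem m hm c, Or.inr ?_⟩
        rw [h]
        have := map_commutatorElement (MulAut.conj c).toMonoidHom g m
        simp only [commutatorElement_def]; group
    have hNormal : (Mser G (k + 1)).Normal := by
      constructor
      intro x hx c
      rw [hMser] at hx ⊢
      induction hx using Subgroup.closure_induction with
      | mem z hz => exact Subgroup.subset_closure (hconj c z hz)
      | one => simpa using Subgroup.one_mem _
      | mul a b _ _ ha hb =>
        have : c * (a * b) * c⁻¹ = (c * a * c⁻¹) * (c * b * c⁻¹) := by group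
        rw [this]; exact Subgroup.mul_mem _ ha hb
      | inv a _ ha =>
        have : c * a⁻¹ * c⁻¹ = (c * a * c⁻¹)⁻¹ := by group
        rw [this]; exact Subgroup.inv_mem _ ha
    refine ⟨hNormal, ?_⟩
    intro g m hm
    rw [hMser] at hm ⊢
    induction hm using Subgroup.closure_induction with
    | mem z hz =>
      exact Subgroup.subset_closure ⟨g, z, hSsub hz, Or.inl rfl⟩
    | one => rw [star_one']; exact Subgroup.one_mem _
    | mul a b _ _ ha hb =>
      rw [star_mul_right]
      refine Subgroup.mul_mem _ ha ?_
      have := hNormal.conj_mem _ hb a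
      rwa [hMser] at this
    | inv a _ ha =>
      rw [mulLieStarInv]
      have h1 : (star g a)⁻¹ ∈ Subgroup.closure S := Subgroup.inv_mem _ ha
      have h2 := hNormal.conj_mem _ h1 a⁻¹
      rw [hMser] at h2
      simpa [mul_assoc] using h2

lemma Mser_succ_le (k : ℕ) : Mser G (k + 1) ≤ Mser G k := by
  obtain ⟨ihN, ihS⟩ := Mser_isIdeal (G := G) k
  show Subgroup.closure _ ≤ _
  rw [Subgroup.closure_le]
  rintro z ⟨g, m, hm, h | h⟩
  · rw [h]; exact ihS g m hm
  · rw [h]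
    have h1 : g * m * g⁻¹ ∈ Mser G k := ihN.conj_mem m hm g
    have : ⁅g, m⁆ = (g * m * g⁻¹) * m⁻¹ := by group
    rw [this]; exact (Mser G k).mul_mem h1 ((Mser G k).inv_mem hm)

lemma Mser_antitone {k l : ℕ} (h : k ≤ l) : Mser G l ≤ Mser G k := by
  induction l with
  | zero => simp at h; subst h; exact le_rfl
  | succ l ih =>
    rcases Nat.eq_or_lt_of_le h with h' | h'
    · subst h'; exact le_rfl
    · exact le_trans (Mser_succ_le l) (ih (Nat.lt_succ_iff.mp h'))

/-- Under a compatible quotient, `Mser` of the quotient is the image of `Mser`. -/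
lemma Mser_quotient (N : Subgroup G) [N.Normal] (L : MulLie (G ⧸ N))
    (hcompat : ∀ x y : G, (QuotientGroup.mk (star x y) : G ⧸ N) =
      L.star (QuotientGroup.mk x) (QuotientGroup.mk y)) (k : ℕ) :
    @Mser (G ⧸ N) _ L k = (Mser G k).map (QuotientGroup.mk' N) := by
  induction k with
  | zero =>
    show ⊤ = Subgroup.map _ ⊤
    rw [Subgroup.map_top_of_surjective _ (QuotientGroup.mk'_surjective N)]
  | succ k ih =>
    show Subgroup.closure _ = Subgroup.map _ (Subgroup.closure _)
    rw [MonoidHom.map_closure]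
    congr 1
    ext z
    constructor
    · rintro ⟨gq, mq, hmq, h | h⟩
      · rw [ih] at hmq
        obtain ⟨m, hm, rfl⟩ := hmq
        obtain ⟨g, rfl⟩ := QuotientGroup.mk'_surjective N gq
        refine ⟨star g m, ⟨g, m, hm, Or.inl rfl⟩, ?_⟩
        rw [h]
        exact hcompat g m
      · rw [ih] at hmq
        obtain ⟨m, hm, rfl⟩ := hmq
        obtain ⟨g, rfl⟩ := QuotientGroup.mk'_surjective N gq
        refine ⟨⁅g, m⁆, ⟨g, m, hm, Or.inr rfl⟩, ?_⟩
        rw [h, map_commutatorElement]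
    · rintro ⟨w, ⟨g, m, hm, h | h⟩, rfl⟩
      · have hmem : QuotientGroup.mk' N m ∈ @Mser (G ⧸ N) _ L k := by
          rw [ih]; exact ⟨m, hm, rfl⟩
        refine ⟨QuotientGroup.mk' N g, QuotientGroup.mk' N m, hmem, Or.inl ?_⟩
        rw [h]
        exact hcompat g m
      · have hmem : QuotientGroup.mk' N m ∈ @Mser (G ⧸ N) _ L k := by
          rw [ih]; exact ⟨m, hm, rfl⟩
        refine ⟨QuotientGroup.mk' N g, QuotientGroup.mk' N m, hmem, Or.inr ?_⟩
        rw [h, map_commutatorElement]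

end Aux

/-- Let `H` and `K` be ideals of `G` such that `G/H` and `G/K` are
`M𝒵`-nilpotent of classes `n` and `m` respectively. Then `G/(H ∩ K)` is
`M𝒵`-nilpotent of class at most `max n m`. -/
theorem quotient_inf_MZnilpotent
    {G : Type*} [Group G] [MulLie G] (H K : Subgroup G) [H.Normal] [K.Normal]
    (hH : ∀ g h : G, h ∈ H → star g h ∈ H)
    (hK : ∀ g k : G, k ∈ K → star g k ∈ K)
    (LH : MulLie (G ⧸ H)) (LK : MulLie (G ⧸ K)) (LHK : MulLie (G ⧸ (H ⊓ K)))
    (hcompatH : ∀ x y : G, (QuotientGroup.mk (star x y) : G ⧸ H) =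
      LH.star (QuotientGroup.mk x) (QuotientGroup.mk y))
    (hcompatK : ∀ x y : G, (QuotientGroup.mk (star x y) : G ⧸ K) =
      LK.star (QuotientGroup.mk x) (QuotientGroup.mk y))
    (hcompatHK : ∀ x y : G, (QuotientGroup.mk (star x y) : G ⧸ (H ⊓ K)) =
      LHK.star (QuotientGroup.mk x) (QuotientGroup.mk y))
    (n m : ℕ)
    (hn : @Mser (G ⧸ H) _ LH n = ⊥) (hn' : @Mser (G ⧸ H) _ LH (n - 1) ≠ ⊥)
    (hm : @Mser (G ⧸ K) _ LK m = ⊥) (hm' : @Mser (G ⧸ K) _ LK (m - 1) ≠ ⊥) :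
    @Mser (G ⧸ (H ⊓ K)) _ LHK (max n m) = ⊥ := by
  have hMn : Mser G n ≤ H := by
    have := Mser_quotient H LH hcompatH n
    rw [hn] at this
    intro x hx
    have : QuotientGroup.mk' H x ∈ (⊥ : Subgroup (G ⧸ H)) := by
      rw [this]; exact ⟨x, hx, rfl⟩
    rw [Subgroup.mem_bot] at this
    rwa [← QuotientGroup.ker_mk' H, MonoidHom.mem_ker]
  have hMm : Mser G m ≤ K := by
    have := Mser_quotient K LK hcompatK m
    rw [hm] at this
    intro x hx
    have : QuotientGroup.mk' K x ∈ (⊥ : Subgroup (G ⧸ K)) := by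
      rw [this]; exact ⟨x, hx, rfl⟩
    rw [Subgroup.mem_bot] at this
    rwa [← QuotientGroup.ker_mk' K, MonoidHom.mem_ker]
  have hle : Mser G (max n m) ≤ H ⊓ K :=
    le_inf (le_trans (Mser_antitone (le_max_left n m)) hMn)
      (le_trans (Mser_antitone (le_max_right n m)) hMm)
  rw [Mser_quotient (H ⊓ K) LHK hcompatHK (max n m)]
  rw [eq_bot_iff]
  rintro x ⟨y, hy, rfl⟩
  rw [Subgroup.mem_bot, ← MonoidHom.mem_ker, QuotientGroup.ker_mk']
  exact hle hy
end

section
/- Define 𝒵*(G) as the intersection of φ(𝒵(E)) over all central extensions 1 → ker φ → E → G → 1 of the multiplicative Lie algebra G. Then G is Lie capable if and only if 𝒵*(G) = {1}. -/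
open MulLie

/-- `𝒵(G) = LZ(G) ∩ Z(G)`: the elements that are in the Lie center and in the
group center. -/
def zSet (G : Type u) [Group G] [MulLie G] : Set G :=
  {x : G | (∀ y : G, star x y = 1) ∧ ∀ y : G, x * y = y * x}

/-- A central extension `1 → ker f → E → G → 1` of the multiplicative Lie
algebra `G`: a surjective multiplicative Lie algebra homomorphism `f : E → G`
whose kernel is contained in `Z(E) ∩ LZ(E)`. -/
structure CentralExtOf (G : Type u) [Group G] [MulLie G] : Type (u + 1) where
  E : Type u
  [grp : Group E]
  [lie : MulLie E]
  f : E →* G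
  surj : Function.Surjective f
  map_star : ∀ x y : E, f (MulLie.star x y) = star (f x) (f y)
  central : ∀ x : E, f x = 1 → x ∈ zSet E

attribute [instance] CentralExtOf.grp CentralExtOf.lie

/-- A multiplicative Lie algebra `G` is Lie capable if `G ≅ E/𝒵(E)` for some
multiplicative Lie algebra `E`, i.e. there is a surjective multiplicative Lie
algebra homomorphism `E → G` whose kernel is exactly `𝒵(E)`. -/
def LieCapable (G : Type u) [Group G] [MulLie G] : Prop :=
  ∃ C : CentralExtOf G, ∀ x : C.E, C.f x = 1 ↔ x ∈ zSet C.E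


/-- `𝒵*(G)`: the intersection of `φ(𝒵(E))` over all central extensions
`1 → ker φ → E → G → 1` of `G`. -/
def zStar (G : Type u) [Group G] [MulLie G] : Set G :=
  {g : G | ∀ C : CentralExtOf G, g ∈ C.f '' zSet C.E}

/- ### Auxiliary machinery -/

lemma star_one_left {G : Type*} [Group G] [MulLie G] (y : G) : star (1:G) y = 1 := by
  have h := star_mul_left (1:G) 1 y
  simp only [one_mul, inv_one, mul_one] at h
  exact right_eq_mul.mp h

set_option linter.unusedVariables false in
instance prodMulLie {A B : Type*} [Group A] [Group B] [MulLie A] [MulLie B] :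
    MulLie (A × B) where
  star p q := (star p.1 q.1, star p.2 q.2)
  star_self p := Prod.ext (star_self _) (star_self _)
  star_mul_right p q r := Prod.ext (star_mul_right ..) (star_mul_right ..)
  star_mul_left p q r := Prod.ext (star_mul_left ..) (star_mul_left ..)
  jacobi p q r := Prod.ext (jacobi ..) (jacobi ..)
  conj_star p q r := Prod.ext (conj_star ..) (conj_star ..)

set_option linter.unusedVariables false in
instance piMulLie {ι : Type*} {E : ι → Type*} [∀ i, Group (E i)] [∀ i, MulLie (E i)] :
    MulLie (∀ i, E i) where
  star f g := fun i => star (f i) (g i)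
  star_self f := funext fun i => star_self _
  star_mul_right f g h := funext fun i => star_mul_right ..
  star_mul_left f g h := funext fun i => star_mul_left ..
  jacobi f g h := funext fun i => jacobi ..
  conj_star f g h := funext fun i => conj_star ..

def subMulLie {A : Type*} [Group A] [MulLie A] (H : Subgroup A)
    (hst : ∀ x y : A, x ∈ H → y ∈ H → star x y ∈ H) : MulLie H where
  star x y := ⟨star (x:A) (y:A), hst _ _ x.2 y.2⟩
  star_self x := Subtype.ext (star_self (x:A))
  star_mul_right x y z := Subtype.ext (star_mul_right (x:A) y z)
  star_mul_left x y z := Subtype.ext (star_mul_left (x:A) y z)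
  jacobi x y z := Subtype.ext (jacobi (x:A) y z)
  conj_star x y z := Subtype.ext (conj_star (x:A) y z)

/-- The identity central extension. -/
def idExt (G : Type u) [Group G] [MulLie G] : CentralExtOf G where
  E := G
  f := MonoidHom.id G
  surj := fun g => ⟨g, rfl⟩
  map_star := fun _ _ => rfl
  central := fun x hx => by
    have : x = 1 := hx
    subst this
    exact ⟨fun y => star_one_left y, fun y => by rw [one_mul, mul_one]⟩

variable (G : Type u) [Group G] [MulLie G]

open Classical

/-- For each subset `S` of `G`, a central extension whose `𝒵`-image is `S`
(if one exists). -/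
noncomputable def extFam : Set G → CentralExtOf G := fun S =>
  if h : ∃ D : CentralExtOf G, D.f '' zSet D.E = S then h.choose else idExt G

lemma extFam_spec {S : Set G} (h : ∃ D : CentralExtOf G, D.f '' zSet D.E = S) :
    (extFam G S).f '' zSet (extFam G S).E = S := by
  rw [extFam, dif_pos h]
  exact h.choose_spec

/-- The ambient multiplicative Lie algebra for the big fibered product. -/
abbrev Amb : Type u := G × ∀ S : Set G, (extFam G S).E

/-- The big fibered product of the family of central extensions. -/
noncomputable def bigSubgroup : Subgroup (Amb G) where
  carrier := {q | ∀ S, (extFam G S).f (q.2 S) = q.1}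
  one_mem' := fun S => map_one _
  mul_mem' := fun {a b} ha hb S => by
    show (extFam G S).f (a.2 S * b.2 S) = a.1 * b.1
    rw [map_mul, ha S, hb S]
  inv_mem' := fun {a} ha S => by
    show (extFam G S).f (a.2 S)⁻¹ = a.1⁻¹
    rw [map_inv, ha S]

lemma bigSubgroup_star_mem {a b : Amb G} (ha : a ∈ bigSubgroup G) (hb : b ∈ bigSubgroup G) :
    star a b ∈ bigSubgroup G := fun S => by
  show (extFam G S).f (star (a.2 S) (b.2 S)) = star a.1 b.1
  rw [(extFam G S).map_star, ha S, hb S]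

noncomputable instance : MulLie (bigSubgroup G) :=
  subMulLie _ (fun _ _ hx hy => bigSubgroup_star_mem G hx hy)

/-- The projection to `G`. -/
noncomputable def bigF : bigSubgroup G →* G :=
  (MonoidHom.fst G _).comp (bigSubgroup G).subtype

lemma big_surj : Function.Surjective (bigF G) := fun g =>
  ⟨⟨(g, fun S => ((extFam G S).surj g).choose), fun S => ((extFam G S).surj g).choose_spec⟩, rfl⟩

lemma big_central (x : bigSubgroup G) (hx : bigF G x = 1) : x ∈ zSet (bigSubgroup G) := by
  have hx1 : (x : Amb G).1 = 1 := hx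
  have hcomp : ∀ S, (x : Amb G).2 S ∈ zSet (extFam G S).E := fun S =>
    (extFam G S).central _ (by rw [x.2 S, hx1])
  constructor
  · intro y
    apply Subtype.ext
    apply Prod.ext
    · show star (x : Amb G).1 (y : Amb G).1 = 1
      rw [hx1]; exact star_one_left _
    · exact funext fun S => (hcomp S).1 ((y : Amb G).2 S)
  · intro y
    apply Subtype.ext
    apply Prod.ext
    · show (x : Amb G).1 * (y : Amb G).1 = (y : Amb G).1 * (x : Amb G).1
      rw [hx1, one_mul, mul_one]
    · exact funext fun S => (hcomp S).2 ((y : Amb G).2 S)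

/-- The big fibered product as a central extension of `G`. -/
noncomputable def bigExt : CentralExtOf G where
  E := bigSubgroup G
  f := bigF G
  surj := big_surj G
  map_star := fun _ _ => rfl
  central := big_central G

/-- Any element of a component extension lifts to the big fibered product. -/
lemma lift_aux (S : Set G) (y : (extFam G S).E) :
    ∃ z : bigSubgroup G, (z : Amb G).2 S = y := by
  classical
  set g := (extFam G S).f y with hg
  refine ⟨⟨(g, Function.update (fun S' => ((extFam G S').surj g).choose) S y), ?_⟩, ?_⟩
  · intro S'
    show (extFam G S').f (Function.update (fun S'' => ((extFam G S'').surj g).choose) S y S') = g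
    by_cases h : S' = S
    · subst h
      rw [Function.update_self]
    · rw [Function.update_of_ne h]
      exact ((extFam G S').surj g).choose_spec
  · show Function.update (fun S'' => ((extFam G S'').surj g).choose) S y S = y
    rw [Function.update_self]

lemma big_zSet_sub (x : bigSubgroup G) (hx : x ∈ zSet (bigSubgroup G)) :
    bigF G x ∈ zStar G := by
  classical
  intro C
  set S : Set G := C.f '' zSet C.E with hS
  have hex : ∃ D : CentralExtOf G, D.f '' zSet D.E = S := ⟨C, rfl⟩
  have hspec := extFam_spec G hex
  -- the S-component of x is in 𝒵 of the chosen extension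
  have hmem : (x : Amb G).2 S ∈ zSet (extFam G S).E := by
    constructor <;> intro y
    · -- lift y to the big product
      obtain ⟨z, hz⟩ := lift_aux G S y
      have e1 := hx.1 z
      have e1' : star ((x : Amb G).2 S) ((z : Amb G).2 S) = 1 :=
        congrArg (fun t : bigSubgroup G => (t : Amb G).2 S) e1
      rwa [hz] at e1'
    · obtain ⟨z, hz⟩ := lift_aux G S y
      have e2 := hx.2 z
      have e2' : (x : Amb G).2 S * (z : Amb G).2 S = (z : Amb G).2 S * (x : Amb G).2 S :=
        congrArg (fun t : bigSubgroup G => (t : Amb G).2 S) e2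
      rwa [hz] at e2'
  have : (extFam G S).f ((x : Amb G).2 S) ∈ S := by
    have h1 : (extFam G S).f ((x : Amb G).2 S) ∈ (extFam G S).f '' zSet (extFam G S).E :=
      ⟨_, hmem, rfl⟩
    rwa [hspec] at h1
  rwa [x.2 S] at this

/-- `G` is Lie capable if and only if `𝒵*(G) = {1}`. -/
theorem lieCapable_iff_zStar_eq_one (G : Type u) [Group G] [MulLie G] :
    LieCapable G ↔ zStar G = {1} := by
  constructor
  · rintro ⟨C, hC⟩
    apply Set.eq_singleton_iff_unique_mem.mpr
    refine ⟨fun D => ⟨1, D.central 1 (map_one D.f), map_one D.f⟩, ?_⟩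
    intro g hg
    obtain ⟨x, hx, rfl⟩ := hg C
    exact (hC x).mpr hx
  · intro hz
    refine ⟨bigExt G, fun x => ⟨big_central G x, fun hx => ?_⟩⟩
    have h := big_zSet_sub G x hx
    rw [hz] at h
    exact h
end
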